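/- Let G be a graph on n vertices, let d = d(n) ≥ 1, and let C₁, C₂, C₃, M be positive constants. Let ℵ_M = {v : deg(v) ≤ d/M}, let W be the set of vertices of positive degree, and let I be the number of isolated vertices. Suppose: (1) every vertex has degree at most C₁ d; (2) sup{ |xᵗAy| : ‖x‖ = 1, xᵗ𝟙 = 0, ‖y‖ = 1 } ≤ C₂√d; (3) there are no edges between vertices of ℵ_M, |ℵ_M| ≤ n/2, and every vertex outside ℵ_M has at most one neighbor in ℵ_M; (4) sup{ |xᵗ T^{−1/2} 𝟙_{ℵ_M^c}| : ‖x‖ = 1, xᵗ T^{1/2}𝟙_W = 0 } ≤ C₃ √n / d. Then there is a constant C = C(C₁,C₂,C₃,M) such that max_{i > I+1} |1 − λ_i| < C/√d, where 0 = λ_1 ≤ λ_2 ≤ … ≤ λ_n are the eigenvalues of the normalized Laplacian of G. -/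

import Mathlib

open MeasureTheory

open scoped Classical in
noncomputable def normLap {V : Type*} [Fintype V] (G : SimpleGraph V) : Matrix V V ℝ :=
  fun u v =>
    (if u = v ∧ 0 < G.degree u then (1 : ℝ) else 0) -
      (if G.Adj u v then 1 / (Real.sqrt (G.degree u) * Real.sqrt (G.degree v)) else 0)

lemma normLap_isHermitian {V : Type*} [Fintype V] (G : SimpleGraph V) :
    (normLap G).IsHermitian := by
  classical
  unfold Matrix.IsHermitian
  ext u v
  simp only [Matrix.conjTranspose_apply, star_trivial, normLap]
  by_cases h : u = v
  · subst h; rfl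
  · have h1 : ¬(v = u ∧ 0 < G.degree v) := fun hc => h hc.1.symm
    have h2 : ¬(u = v ∧ 0 < G.degree u) := fun hc => h hc.1
    rw [if_neg h1, if_neg h2]
    by_cases hadj : G.Adj u v
    · rw [if_pos hadj, if_pos (G.adj_symm hadj), mul_comm]
    · rw [if_neg hadj, if_neg (fun hc => hadj (G.adj_symm hc))]

noncomputable def sortedLapEigs {V : Type*} [Finite V] (G : SimpleGraph V) :
    Fin (Nat.card V) → ℝ :=
  letI : Fintype V := Fintype.ofFinite V
  letI : DecidableEq V := Classical.decEq V
  let f : Fin (Nat.card V) → ℝ := fun i =>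
    (normLap_isHermitian G).eigenvalues
      ((Fintype.equivFin V).symm (finCongr (Nat.card_eq_fintype_card) i))
  f ∘ Tuple.sort f

noncomputable def lambdaGap {V : Type*} [Finite V] (G : SimpleGraph V) : ℝ :=
  ⨆ i : {i : Fin (Nat.card V) // 0 < (i : ℕ)}, |1 - sortedLapEigs G i.1|


open scoped Classical

namespace Stmt4Aux
open Matrix

lemma univ_congr {α : Type*} (F1 F2 : Fintype α) : @Finset.univ α F1 = @Finset.univ α F2 := by
  cases Subsingleton.elim F1 F2; rfl

lemma normLap_congr {V : Type*} (F1 F2 : Fintype V) (G : SimpleGraph V) :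
    @normLap V F1 G = @normLap V F2 G := by
  cases Subsingleton.elim F1 F2; rfl

lemma mulVec_congr {m : Type*} {k : Type*} (F1 F2 : Fintype k) (M : Matrix m k ℝ) (y : k → ℝ) :
    @Matrix.mulVec m k ℝ _ F1 M y = @Matrix.mulVec m k ℝ _ F2 M y := by
  cases Subsingleton.elim F1 F2; rfl

variable {n : ℕ}


open scoped Classical in
noncomputable def Qf (G : SimpleGraph (Fin n)) (a b : Fin n → ℝ) : ℝ :=
  ∑ u, ∑ v, a u * ((if G.Adj u v then (1:ℝ) else 0) * b v)

lemma Qf_add_left (G : SimpleGraph (Fin n)) (a a' b : Fin n → ℝ) :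
    Qf G (a + a') b = Qf G a b + Qf G a' b := by
  simp only [Qf, Pi.add_apply, add_mul, Finset.sum_add_distrib]

lemma Qf_smul_left (G : SimpleGraph (Fin n)) (c : ℝ) (a b : Fin n → ℝ) :
    Qf G (c • a) b = c * Qf G a b := by
  simp only [Qf, Pi.smul_apply, smul_eq_mul, Finset.mul_sum]
  exact Finset.sum_congr rfl fun u _ => Finset.sum_congr rfl fun v _ => by ring

lemma Qf_symm (G : SimpleGraph (Fin n)) (a b : Fin n → ℝ) : Qf G a b = Qf G b a := by
  simp only [Qf]
  rw [Finset.sum_comm]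
  refine Finset.sum_congr rfl fun v _ => Finset.sum_congr rfl fun u _ => ?_
  by_cases h : G.Adj u v
  · rw [if_pos h, if_pos h.symm]; ring
  · rw [if_neg h, if_neg (fun hc => h hc.symm)]; ring

lemma Qf_add_right (G : SimpleGraph (Fin n)) (a b b' : Fin n → ℝ) :
    Qf G a (b + b') = Qf G a b + Qf G a b' := by
  rw [Qf_symm, Qf_add_left, Qf_symm G b a, Qf_symm G b' a]

lemma Qf_smul_right (G : SimpleGraph (Fin n)) (c : ℝ) (a b : Fin n → ℝ) :
    Qf G a (c • b) = c * Qf G a b := by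
  rw [Qf_symm, Qf_smul_left, Qf_symm G b a]

lemma sq_sum_le_of_card_le_one {α : Type*} (s : Finset α) (f : α → ℝ) (h : s.card ≤ 1) :
    (∑ i ∈ s, f i) ^ 2 ≤ ∑ i ∈ s, f i ^ 2 := by
  rcases Nat.le_one_iff_eq_zero_or_eq_one.mp h with h0 | h1
  · rw [Finset.card_eq_zero.mp h0]; simp
  · obtain ⟨a, ha⟩ := Finset.card_eq_one.mp h1
    rw [ha]; simp

set_option maxHeartbeats 2000000 in
/-- the analytic estimate -/
lemma quad_est (G : SimpleGraph (Fin n)) (d C₁ C₂ C₃ M : ℝ)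
    (hC₁ : 0 < C₁) (hC₂ : 0 < C₂) (hC₃ : 0 < C₃) (hM : 0 < M) (hd : 1 ≤ d)
    (h1 : ∀ v, (G.degree v : ℝ) ≤ C₁ * d)
    (h2 : ∀ x y : Fin n → ℝ, (∑ i, x i) = 0 → (∑ i, x i ^ 2) = 1 → (∑ i, y i ^ 2) = 1 →
      |∑ u, ∑ v, x u * ((if G.Adj u v then (1 : ℝ) else 0) * y v)| ≤ C₂ * Real.sqrt d)
    (h3a : ∀ u v : Fin n, (G.degree u : ℝ) ≤ d / M → (G.degree v : ℝ) ≤ d / M → ¬ G.Adj u v)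
    (h3c : ∀ u : Fin n, ¬ ((G.degree u : ℝ) ≤ d / M) →
      {v : Fin n | (G.degree v : ℝ) ≤ d / M ∧ G.Adj u v}.ncard ≤ 1)
    (h4 : ∀ x : Fin n → ℝ, (∑ i, x i ^ 2) = 1 →
      (∑ v, x v * Real.sqrt (G.degree v) * (if 0 < G.degree v then (1 : ℝ) else 0)) = 0 →
      |∑ v, x v * (if 0 < G.degree v then 1 / Real.sqrt (G.degree v) else 0) *
          (if (G.degree v : ℝ) ≤ d / M then 0 else 1)| ≤ C₃ * Real.sqrt n / d) :
    ∀ x : Fin n → ℝ, (∑ v, x v ^ 2) = 1 → (∀ v, G.degree v = 0 → x v = 0) →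
      (∑ v, x v * Real.sqrt (G.degree v)) = 0 →
      |1 - ∑ u, ∑ v, x u * (normLap G u v * x v)| ≤
        (2 * Real.sqrt M + C₂ * M + 2 * C₂ * C₃ * Real.sqrt M + C₁ * C₃ ^ 2) / Real.sqrt d := by
  intro x hx1 hx0 hxg
  have hn : 0 < n := by
    rcases Nat.eq_zero_or_pos n with h | h
    · subst h; simp at hx1
    · exact h
  have hd0 : (0:ℝ) < d := lt_of_lt_of_le one_pos hd
  have hsd0 : 0 < Real.sqrt d := Real.sqrt_pos.mpr hd0
  have hsd1 : (1:ℝ) ≤ Real.sqrt d := by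
    rw [show (1:ℝ) = Real.sqrt 1 by simp]
    exact Real.sqrt_le_sqrt hd
  have hsdd : Real.sqrt d * Real.sqrt d = d := Real.mul_self_sqrt hd0.le
  have hsdled : Real.sqrt d ≤ d := by nlinarith
  have hn0 : (0:ℝ) < (n:ℝ) := by exact_mod_cast hn
  have hsn0 : 0 < Real.sqrt n := Real.sqrt_pos.mpr hn0
  have hsnn : Real.sqrt n * Real.sqrt n = (n:ℝ) := Real.mul_self_sqrt hn0.le
  have hsM0 : (0:ℝ) ≤ Real.sqrt M := Real.sqrt_nonneg M
  have hsMM : Real.sqrt M * Real.sqrt M = M := Real.mul_self_sqrt hM.le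
  have hdM : 0 < d / M := div_pos hd0 hM
  set z : Fin n → ℝ := fun v => x v * (if 0 < G.degree v then (Real.sqrt (G.degree v))⁻¹ else 0)
    with hzdef
  set z1 : Fin n → ℝ := fun v => if (G.degree v : ℝ) ≤ d / M then z v else 0 with hz1def
  set z2 : Fin n → ℝ := fun v => if (G.degree v : ℝ) ≤ d / M then 0 else z v with hz2def
  have hPdeg : ∀ v : Fin n, ¬ ((G.degree v : ℝ) ≤ d / M) → 0 < G.degree v := by
    intro v hv
    by_contra h
    have h0 : G.degree v = 0 := Nat.eq_zero_of_not_pos h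
    exact hv (by rw [h0]; push_cast; linarith)
  have hzdeg : ∀ v, z v ^ 2 * (G.degree v : ℝ) ≤ x v ^ 2 := by
    intro v
    by_cases hv : 0 < G.degree v
    · have hdv : (0:ℝ) < (G.degree v : ℝ) := by exact_mod_cast hv
      have hsq : Real.sqrt (G.degree v) * Real.sqrt (G.degree v) = (G.degree v : ℝ) :=
        Real.mul_self_sqrt hdv.le
      have heq : z v ^ 2 * (G.degree v : ℝ) = x v ^ 2 := by
        rw [hzdef]
        simp only [if_pos hv]
        have : (x v * (Real.sqrt (G.degree v))⁻¹) ^ 2 * (G.degree v : ℝ)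
            = x v ^ 2 * ((G.degree v : ℝ) / (Real.sqrt (G.degree v) * Real.sqrt (G.degree v))) := by
          ring
        rw [this, hsq, div_self hdv.ne', mul_one]
      rw [heq]
    · have h0 : G.degree v = 0 := Nat.eq_zero_of_not_pos hv
      rw [hzdef]
      simp only [if_neg hv]
      simp [h0, sq_nonneg]
  have hz12 : z = z1 + z2 := by
    funext v
    by_cases hv : (G.degree v : ℝ) ≤ d / M
    · simp [hz1def, hz2def, if_pos hv]
    · simp [hz1def, hz2def, if_neg hv]
  -- reduction to Qf z z
  have hred : 1 - (∑ u, ∑ v, x u * (normLap G u v * x v)) = Qf G z z := by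
    have hmain : (∑ u, ∑ v, x u * (normLap G u v * x v)) = (∑ u, x u ^ 2) - Qf G z z := by
      have hptu : ∀ u : Fin n, ∑ v, x u * (normLap G u v * x v)
          = (if 0 < G.degree u then x u ^ 2 else 0)
            - ∑ v, z u * ((if G.Adj u v then (1:ℝ) else 0) * z v) := by
        intro u
        have hsplit : ∀ v, x u * (normLap G u v * x v)
            = x u * ((if u = v ∧ 0 < G.degree u then (1:ℝ) else 0) * x v)
              - z u * ((if G.Adj u v then (1:ℝ) else 0) * z v) := by
          intro v
          simp only [normLap]
          have h2nd : x u * ((if G.Adj u v then 1 / (Real.sqrt (G.degree u) * Real.sqrt (G.degree v)) else 0) * x v)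
              = z u * ((if G.Adj u v then (1:ℝ) else 0) * z v) := by
            by_cases hadj : G.Adj u v
            · have hdu : 0 < G.degree u := (G.degree_pos_iff_exists_adj u).mpr ⟨v, hadj⟩
              have hdv : 0 < G.degree v := (G.degree_pos_iff_exists_adj v).mpr ⟨u, hadj.symm⟩
              rw [if_pos hadj, if_pos hadj, hzdef]
              simp only [if_pos hdu, if_pos hdv]
              rw [one_div, mul_inv]
              ring
            · rw [if_neg hadj, if_neg hadj]
              ring
          rw [← h2nd]
          ring
        rw [Finset.sum_congr rfl (fun v _ => hsplit v), Finset.sum_sub_distrib]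
        congr 1
        rw [Finset.sum_eq_single u]
        · by_cases hu : 0 < G.degree u
          · rw [if_pos (⟨rfl, hu⟩ : u = u ∧ 0 < G.degree u), if_pos hu]
            ring
          · rw [if_neg (fun hc : u = u ∧ 0 < G.degree u => hu hc.2), if_neg hu]
            ring
        · intro v _ hvu
          rw [if_neg (fun hc : u = v ∧ 0 < G.degree u => hvu hc.1.symm)]
          ring
        · exact fun h => absurd (Finset.mem_univ u) h
      rw [Finset.sum_congr rfl (fun u _ => hptu u), Finset.sum_sub_distrib]
      congr 1
      · refine Finset.sum_congr rfl fun u _ => ?_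
        by_cases hu : 0 < G.degree u
        · rw [if_pos hu]
        · rw [if_neg hu, hx0 u (Nat.eq_zero_of_not_pos hu)]
          simp
    rw [hmain, hx1]
    ring
  -- z2 square sum bound
  have hz2nn : ∀ v, 0 ≤ z2 v ^ 2 := fun v => sq_nonneg _
  have hz2sq : ∑ v, z2 v ^ 2 ≤ M / d := by
    have hpt : ∀ v, z2 v ^ 2 ≤ x v ^ 2 * (M / d) := by
      intro v
      by_cases hv : (G.degree v : ℝ) ≤ d / M
      · rw [hz2def]
        simp only [if_pos hv]
        have : (0:ℝ) ≤ x v ^ 2 * (M / d) := by positivity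
        simpa using this
      · have hdpos := hPdeg v hv
        have hdv : (0:ℝ) < (G.degree v : ℝ) := by exact_mod_cast hdpos
        have hgt : d / M ≤ (G.degree v : ℝ) := le_of_lt (lt_of_not_ge hv)
        have hinv : ((G.degree v : ℝ))⁻¹ ≤ M / d := by
          have h1 : ((G.degree v : ℝ))⁻¹ ≤ (d / M)⁻¹ := by
            apply inv_anti₀ hdM hgt
          rwa [inv_div] at h1
        have heqz : z2 v ^ 2 = x v ^ 2 * ((G.degree v : ℝ))⁻¹ := by
          rw [hz2def]
          simp only [if_neg hv]
          rw [hzdef]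
          simp only [if_pos hdpos]
          rw [mul_pow, inv_pow, sq (Real.sqrt _), Real.mul_self_sqrt hdv.le]
        rw [heqz]
        exact mul_le_mul_of_nonneg_left hinv (sq_nonneg _)
    calc ∑ v, z2 v ^ 2 ≤ ∑ v, x v ^ 2 * (M / d) := Finset.sum_le_sum (fun v _ => hpt v)
    _ = M / d := by rw [← Finset.sum_mul, hx1, one_mul]
  -- B1
  have hB1 : Qf G z1 z1 = 0 := by
    simp only [Qf]
    refine Finset.sum_eq_zero fun u _ => Finset.sum_eq_zero fun v _ => ?_
    by_cases hadj : G.Adj u v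
    · by_cases hu : (G.degree u : ℝ) ≤ d / M
      · by_cases hv : (G.degree v : ℝ) ≤ d / M
        · exact absurd hadj (h3a u v hu hv)
        · rw [hz1def]
          simp only [if_neg hv]
          ring
      · rw [hz1def]
        simp only [if_neg hu]
        ring
    · rw [if_neg hadj]
      ring
  -- cross term
  set t : Fin n → ℝ := fun v => ∑ u, (if G.Adj u v ∧ (G.degree u : ℝ) ≤ d / M then z u else 0)
    with htdef
  have hQ12 : Qf G z1 z2 = ∑ v, z2 v * t v := by
    simp only [Qf]
    rw [Finset.sum_comm]
    refine Finset.sum_congr rfl fun v _ => ?_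
    rw [htdef, Finset.mul_sum]
    refine Finset.sum_congr rfl fun u _ => ?_
    by_cases hadj : G.Adj u v
    · by_cases hu : (G.degree u : ℝ) ≤ d / M
      · rw [hz1def]
        simp only [if_pos hu, if_pos hadj, if_pos (⟨hadj, hu⟩ : G.Adj u v ∧ (G.degree u : ℝ) ≤ d / M)]
        ring
      · rw [hz1def]
        simp only [if_neg hu, if_pos hadj,
          if_neg (fun hc : G.Adj u v ∧ (G.degree u : ℝ) ≤ d / M => hu hc.2)]
        ring
    · rw [if_neg hadj, if_neg (fun hc : G.Adj u v ∧ (G.degree u : ℝ) ≤ d / M => hadj hc.1)]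
      ring
  have htsq : ∑ v, t v ^ 2 ≤ 1 := by
    have hpt : ∀ v, t v ^ 2 ≤ ∑ u, (if G.Adj u v ∧ (G.degree u : ℝ) ≤ d / M then z u ^ 2 else 0) := by
      intro v
      by_cases hv : (G.degree v : ℝ) ≤ d / M
      · have ht0 : t v = 0 := by
          rw [htdef]
          refine Finset.sum_eq_zero fun u _ => ?_
          by_cases hc : G.Adj u v ∧ (G.degree u : ℝ) ≤ d / M
          · exact absurd hc.1 (h3a u v hc.2 hv)
          · rw [if_neg hc]
        rw [ht0]
        rw [show (0:ℝ)^2 = 0 by norm_num]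
        refine Finset.sum_nonneg fun u _ => ?_
        by_cases hc : G.Adj u v ∧ (G.degree u : ℝ) ≤ d / M
        · rw [if_pos hc]; exact sq_nonneg _
        · rw [if_neg hc]
      · have hcard : (Finset.univ.filter
            (fun u => G.Adj u v ∧ (G.degree u : ℝ) ≤ d / M)).card ≤ 1 := by
          have hnc := h3c v hv
          have hseteq : {u : Fin n | (G.degree u : ℝ) ≤ d / M ∧ G.Adj v u}
              = ↑(Finset.univ.filter (fun u => G.Adj u v ∧ (G.degree u : ℝ) ≤ d / M)) := by
            ext u
            simp only [Set.mem_setOf_eq, Finset.coe_filter, Finset.mem_univ, true_and,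
              Set.mem_setOf_eq]
            constructor
            · rintro ⟨hp, ha⟩; exact ⟨ha.symm, hp⟩
            · rintro ⟨ha, hp⟩; exact ⟨hp, ha.symm⟩
          rw [hseteq, Set.ncard_coe_finset] at hnc
          exact hnc
        have htv : t v = ∑ u ∈ Finset.univ.filter
            (fun u => G.Adj u v ∧ (G.degree u : ℝ) ≤ d / M), z u := by
          rw [htdef, Finset.sum_filter]
        have hsq := sq_sum_le_of_card_le_one _ z hcard
        rw [← htv] at hsq
        exact le_of_le_of_eq hsq (Finset.sum_filter _ _)
    have hsum2 : ∑ v, ∑ u, (if G.Adj u v ∧ (G.degree u : ℝ) ≤ d / M then z u ^ 2 else 0) ≤ 1 := by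
      rw [Finset.sum_comm]
      have hptu : ∀ u, (∑ v, (if G.Adj u v ∧ (G.degree u : ℝ) ≤ d / M then z u ^ 2 else 0))
          ≤ z u ^ 2 * (G.degree u : ℝ) := by
        intro u
        have hb : ∀ v, (if G.Adj u v ∧ (G.degree u : ℝ) ≤ d / M then z u ^ 2 else 0)
            ≤ (if G.Adj u v then z u ^ 2 else 0) := by
          intro v
          by_cases hc : G.Adj u v ∧ (G.degree u : ℝ) ≤ d / M
          · rw [if_pos hc, if_pos hc.1]
          · rw [if_neg hc]
            by_cases h' : G.Adj u v
            · rw [if_pos h']; exact sq_nonneg _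
            · rw [if_neg h']
        refine (Finset.sum_le_sum fun v _ => hb v).trans ?_
        rw [Finset.sum_ite, Finset.sum_const, Finset.sum_const_zero, add_zero]
        have hfil : (Finset.univ.filter (fun v => G.Adj u v)) = G.neighborFinset u := by
          ext v; simp [SimpleGraph.mem_neighborFinset]
        rw [hfil, SimpleGraph.card_neighborFinset_eq_degree, nsmul_eq_mul]
        rw [mul_comm]
      refine (Finset.sum_le_sum fun u _ => hptu u).trans ?_
      calc ∑ u, z u ^ 2 * (G.degree u : ℝ) ≤ ∑ u, x u ^ 2 :=
        Finset.sum_le_sum fun u _ => hzdeg u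
      _ = 1 := hx1
    exact (Finset.sum_le_sum fun v _ => hpt v).trans hsum2
  have hcross : |Qf G z1 z2| ≤ Real.sqrt M / Real.sqrt d := by
    rw [hQ12]
    have hCS := Finset.sum_mul_sq_le_sq_mul_sq Finset.univ z2 t
    have hb : (∑ v, z2 v * t v) ^ 2 ≤ M / d := by
      refine hCS.trans ?_
      have h1' : (∑ v, z2 v ^ 2) * (∑ v, t v ^ 2) ≤ (M / d) * 1 := by
        apply mul_le_mul hz2sq htsq
        · exact Finset.sum_nonneg fun v _ => sq_nonneg _
        · positivity
      linarith
    have habs : |∑ v, z2 v * t v| = Real.sqrt ((∑ v, z2 v * t v) ^ 2) :=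
      (Real.sqrt_sq_eq_abs _).symm
    rw [habs]
    refine (Real.sqrt_le_sqrt hb).trans ?_
    rw [Real.sqrt_div hM.le]
  -- z2 sum bound
  have hz2sum : |∑ v, z2 v| ≤ C₃ * Real.sqrt n / d := by
    have horto : (∑ v, x v * Real.sqrt (G.degree v) * (if 0 < G.degree v then (1:ℝ) else 0)) = 0 := by
      have heq0 : (∑ v, x v * Real.sqrt (G.degree v) * (if 0 < G.degree v then (1:ℝ) else 0))
          = ∑ v, x v * Real.sqrt (G.degree v) := by
        refine Finset.sum_congr rfl fun v _ => ?_
        by_cases hv : 0 < G.degree v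
        · rw [if_pos hv, mul_one]
        · have h0 : G.degree v = 0 := Nat.eq_zero_of_not_pos hv
          rw [if_neg hv, mul_zero, h0]
          simp
      rw [heq0, hxg]
    have h := h4 x hx1 horto
    have heq : (∑ v, x v * (if 0 < G.degree v then 1 / Real.sqrt (G.degree v) else 0) *
        (if (G.degree v : ℝ) ≤ d / M then 0 else 1)) = ∑ v, z2 v := by
      refine Finset.sum_congr rfl fun v _ => ?_
      by_cases hv : (G.degree v : ℝ) ≤ d / M
      · rw [if_pos hv, hz2def]
        simp only [if_pos hv]
        ring
      · rw [if_neg hv, hz2def]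
        simp only [if_neg hv]
        rw [hzdef, mul_one, one_div]
    rwa [heq] at h
  set c : ℝ := (∑ v, z2 v) / n with hcdef
  set w : Fin n → ℝ := fun v => z2 v - c with hwdef
  have hsumz2c : (∑ v, z2 v) = (n:ℝ) * c := by
    rw [hcdef]
    field_simp
  have hwsum : ∑ v, w v = 0 := by
    rw [hwdef]
    simp only []
    rw [Finset.sum_sub_distrib, Finset.sum_const, Finset.card_univ, Fintype.card_fin,
      nsmul_eq_mul, hsumz2c]
    ring
  have hcabs : |c| ≤ C₃ / (Real.sqrt n * d) := by
    rw [hcdef, abs_div, abs_of_pos hn0]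
    rw [div_le_div_iff₀ hn0 (by positivity)]
    calc |∑ v, z2 v| * (Real.sqrt n * d) ≤ (C₃ * Real.sqrt n / d) * (Real.sqrt n * d) := by
          apply mul_le_mul_of_nonneg_right hz2sum (by positivity)
    _ = C₃ * (Real.sqrt n * Real.sqrt n) := by field_simp
    _ = C₃ * n := by rw [hsnn]
  have hwsq : ∑ v, w v ^ 2 ≤ M / d := by
    have hexp : ∑ v, w v ^ 2 = (∑ v, z2 v ^ 2) - (n:ℝ) * c ^ 2 := by
      rw [hwdef]
      simp only []
      rw [Finset.sum_congr rfl (fun v _ =>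
        (by ring : (z2 v - c) ^ 2 = z2 v ^ 2 - 2 * c * z2 v + c ^ 2))]
      rw [Finset.sum_add_distrib, Finset.sum_sub_distrib, ← Finset.mul_sum, hsumz2c,
        Finset.sum_const, Finset.card_univ, Fintype.card_fin, nsmul_eq_mul]
      ring
    rw [hexp]
    have : 0 ≤ (n:ℝ) * c ^ 2 := by positivity
    linarith
  -- general Qf bound from h2
  have hQbnd : ∀ a b : Fin n → ℝ, (∑ i, a i) = 0 →
      |Qf G a b| ≤ C₂ * Real.sqrt d * Real.sqrt (∑ i, a i ^ 2) * Real.sqrt (∑ i, b i ^ 2) := by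
    intro a b ha
    have hsa : 0 ≤ ∑ i, a i ^ 2 := Finset.sum_nonneg fun i _ => sq_nonneg _
    have hsb : 0 ≤ ∑ i, b i ^ 2 := Finset.sum_nonneg fun i _ => sq_nonneg _
    by_cases ha2 : (∑ i, a i ^ 2) = 0
    · have ha0 : ∀ i, a i = 0 := by
        intro i
        have h := (Finset.sum_eq_zero_iff_of_nonneg
          (fun i _ => sq_nonneg (a i))).mp ha2 i (Finset.mem_univ i)
        exact pow_eq_zero_iff (two_ne_zero) |>.mp h
      have hQ0 : Qf G a b = 0 := by
        simp only [Qf]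
        refine Finset.sum_eq_zero fun u _ => ?_
        rw [ha0 u]
        simp
      rw [hQ0, abs_zero]
      positivity
    by_cases hb2 : (∑ i, b i ^ 2) = 0
    · have hb0 : ∀ i, b i = 0 := by
        intro i
        have h := (Finset.sum_eq_zero_iff_of_nonneg
          (fun i _ => sq_nonneg (b i))).mp hb2 i (Finset.mem_univ i)
        exact pow_eq_zero_iff (two_ne_zero) |>.mp h
      have hQ0 : Qf G a b = 0 := by
        simp only [Qf]
        refine Finset.sum_eq_zero fun u _ => Finset.sum_eq_zero fun v _ => ?_
        rw [hb0 v]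
        simp
      rw [hQ0, abs_zero]
      positivity
    · have hsa' : 0 < ∑ i, a i ^ 2 := lt_of_le_of_ne hsa (Ne.symm ha2)
      have hsb' : 0 < ∑ i, b i ^ 2 := lt_of_le_of_ne hsb (Ne.symm hb2)
      have hα : 0 < Real.sqrt (∑ i, a i ^ 2) := Real.sqrt_pos.mpr hsa'
      have hβ : 0 < Real.sqrt (∑ i, b i ^ 2) := Real.sqrt_pos.mpr hsb'
      have hαα : Real.sqrt (∑ i, a i ^ 2) ^ 2 = ∑ i, a i ^ 2 := Real.sq_sqrt hsa
      have hββ : Real.sqrt (∑ i, b i ^ 2) ^ 2 = ∑ i, b i ^ 2 := Real.sq_sqrt hsb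
      have hnorm1 : ∑ i, ((Real.sqrt (∑ i, a i ^ 2))⁻¹ • a) i ^ 2 = 1 := by
        simp only [Pi.smul_apply, smul_eq_mul, mul_pow]
        rw [← Finset.mul_sum, inv_pow, hαα]
        exact inv_mul_cancel₀ (ne_of_gt hsa')
      have hnorm2 : ∑ i, ((Real.sqrt (∑ i, b i ^ 2))⁻¹ • b) i ^ 2 = 1 := by
        simp only [Pi.smul_apply, smul_eq_mul, mul_pow]
        rw [← Finset.mul_sum, inv_pow, hββ]
        exact inv_mul_cancel₀ (ne_of_gt hsb')
      have hsum0 : ∑ i, ((Real.sqrt (∑ i, a i ^ 2))⁻¹ • a) i = 0 := by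
        simp only [Pi.smul_apply, smul_eq_mul]
        rw [← Finset.mul_sum, ha, mul_zero]
      have happ := h2 _ _ hsum0 hnorm1 hnorm2
      have hQs : (∑ u, ∑ v, ((Real.sqrt (∑ i, a i ^ 2))⁻¹ • a) u *
          ((if G.Adj u v then (1 : ℝ) else 0) * ((Real.sqrt (∑ i, b i ^ 2))⁻¹ • b) v))
          = (Real.sqrt (∑ i, a i ^ 2))⁻¹ * ((Real.sqrt (∑ i, b i ^ 2))⁻¹ * Qf G a b) := by
        rw [show (∑ u, ∑ v, ((Real.sqrt (∑ i, a i ^ 2))⁻¹ • a) u *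
            ((if G.Adj u v then (1 : ℝ) else 0) * ((Real.sqrt (∑ i, b i ^ 2))⁻¹ • b) v))
            = Qf G ((Real.sqrt (∑ i, a i ^ 2))⁻¹ • a) ((Real.sqrt (∑ i, b i ^ 2))⁻¹ • b) from rfl]
        rw [Qf_smul_left, Qf_smul_right]
      rw [hQs, abs_mul, abs_mul, abs_inv, abs_inv, abs_of_pos hα, abs_of_pos hβ] at happ
      calc |Qf G a b| = Real.sqrt (∑ i, a i ^ 2) * Real.sqrt (∑ i, b i ^ 2) *
            ((Real.sqrt (∑ i, a i ^ 2))⁻¹ * ((Real.sqrt (∑ i, b i ^ 2))⁻¹ * |Qf G a b|)) := by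
            field_simp
      _ ≤ Real.sqrt (∑ i, a i ^ 2) * Real.sqrt (∑ i, b i ^ 2) * (C₂ * Real.sqrt d) := by
            apply mul_le_mul_of_nonneg_left happ (by positivity)
      _ = C₂ * Real.sqrt d * Real.sqrt (∑ i, a i ^ 2) * Real.sqrt (∑ i, b i ^ 2) := by ring
  -- decomposition of Qf z2 z2
  set one : Fin n → ℝ := fun _ => 1 with honedef
  have honesq : (∑ i : Fin n, one i ^ 2) = (n:ℝ) := by
    rw [honedef]
    simp
  have hz2w : z2 = w + c • one := by
    funext v
    rw [hwdef, honedef]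
    simp only [Pi.add_apply, Pi.smul_apply, smul_eq_mul, mul_one]
    ring
  have hQz2 : Qf G z2 z2 = Qf G w w + c * Qf G w one + c * Qf G one w + c * (c * Qf G one one) := by
    rw [hz2w, Qf_add_left, Qf_add_right, Qf_add_right, Qf_smul_left, Qf_smul_right,
      Qf_smul_left, Qf_smul_right]
    ring
  have hQ1w : Qf G one w = Qf G w one := Qf_symm G one w
  have hQ11nn : 0 ≤ Qf G one one := by
    simp only [Qf, honedef]
    refine Finset.sum_nonneg fun u _ => Finset.sum_nonneg fun v _ => ?_
    by_cases hadj : G.Adj u v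
    · rw [if_pos hadj]; norm_num
    · rw [if_neg hadj]; norm_num
  have hQ11 : Qf G one one ≤ (n:ℝ) * (C₁ * d) := by
    have hrow : ∀ u : Fin n, (∑ v, one u * ((if G.Adj u v then (1:ℝ) else 0) * one v))
        = (G.degree u : ℝ) := by
      intro u
      rw [honedef]
      simp only [one_mul, mul_one]
      rw [Finset.sum_boole]
      congr 1
      have hfil : (Finset.univ.filter (fun v => G.Adj u v)) = G.neighborFinset u := by
        ext v; simp [SimpleGraph.mem_neighborFinset]
      rw [hfil, SimpleGraph.card_neighborFinset_eq_degree]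
    calc Qf G one one = ∑ u, (G.degree u : ℝ) := Finset.sum_congr rfl fun u _ => hrow u
    _ ≤ ∑ u : Fin n, C₁ * d := Finset.sum_le_sum fun u _ => h1 u
    _ = (n:ℝ) * (C₁ * d) := by
        rw [Finset.sum_const, Finset.card_univ, Fintype.card_fin, nsmul_eq_mul]
  -- assembled bounds
  have hwsqrt : Real.sqrt (∑ i, w i ^ 2) ≤ Real.sqrt M / Real.sqrt d := by
    refine (Real.sqrt_le_sqrt hwsq).trans ?_
    rw [Real.sqrt_div hM.le]
  have hQww : |Qf G w w| ≤ C₂ * M / Real.sqrt d := by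
    have h := hQbnd w w hwsum
    have hmm : Real.sqrt (∑ i, w i ^ 2) * Real.sqrt (∑ i, w i ^ 2) = ∑ i, w i ^ 2 :=
      Real.mul_self_sqrt (Finset.sum_nonneg fun i _ => sq_nonneg _)
    calc |Qf G w w| ≤ C₂ * Real.sqrt d * Real.sqrt (∑ i, w i ^ 2) * Real.sqrt (∑ i, w i ^ 2) := h
    _ = C₂ * Real.sqrt d * (∑ i, w i ^ 2) := by rw [mul_assoc, hmm]
    _ ≤ C₂ * Real.sqrt d * (M / d) := by
        apply mul_le_mul_of_nonneg_left hwsq (by positivity)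
    _ = C₂ * M / Real.sqrt d := by
        field_simp
        linear_combination hsdd
  have hQw1 : |Qf G w one| ≤ C₂ * Real.sqrt d * (Real.sqrt M / Real.sqrt d) * Real.sqrt n := by
    have h := hQbnd w one hwsum
    rw [honesq] at h
    refine h.trans ?_
    apply mul_le_mul_of_nonneg_right _ (Real.sqrt_nonneg _)
    exact mul_le_mul_of_nonneg_left hwsqrt (by positivity)
  have hterm2 : |c * Qf G w one| ≤ C₂ * C₃ * Real.sqrt M / Real.sqrt d := by
    rw [abs_mul]
    have h1' : |c| * |Qf G w one| ≤ (C₃ / (Real.sqrt n * d)) *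
        (C₂ * Real.sqrt d * (Real.sqrt M / Real.sqrt d) * Real.sqrt n) := by
      apply mul_le_mul hcabs hQw1 (abs_nonneg _) (by positivity)
    refine h1'.trans ?_
    have heq2 : (C₃ / (Real.sqrt n * d)) * (C₂ * Real.sqrt d * (Real.sqrt M / Real.sqrt d) * Real.sqrt n)
        = C₂ * C₃ * Real.sqrt M / d := by
      field_simp
    rw [heq2]
    apply div_le_div_of_nonneg_left _ hsd0 hsdled
    positivity
  have hterm3 : |c * (c * Qf G one one)| ≤ C₁ * C₃ ^ 2 / Real.sqrt d := by
    have hcc : c * c ≤ (C₃ / (Real.sqrt n * d)) * (C₃ / (Real.sqrt n * d)) := by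
      rw [← abs_mul_abs_self c]
      apply mul_le_mul hcabs hcabs (abs_nonneg _) (by positivity)
    have h0 : |c * (c * Qf G one one)| = (c * c) * Qf G one one := by
      rw [abs_mul, abs_mul, abs_of_nonneg hQ11nn, ← abs_mul_abs_self c]
      ring
    rw [h0]
    have h1' : (c * c) * Qf G one one ≤ ((C₃ / (Real.sqrt n * d)) * (C₃ / (Real.sqrt n * d))) *
        ((n:ℝ) * (C₁ * d)) := by
      apply mul_le_mul hcc hQ11 hQ11nn (by positivity)
    refine h1'.trans ?_
    have heq3 : ((C₃ / (Real.sqrt n * d)) * (C₃ / (Real.sqrt n * d))) * ((n:ℝ) * (C₁ * d))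
        = C₁ * C₃ ^ 2 / d := by
      field_simp
      linear_combination (-1) * hsnn
    rw [heq3]
    apply div_le_div_of_nonneg_left _ hsd0 hsdled
    positivity
  -- final assembly
  rw [hred]
  have hsplit4 : Qf G z z = Qf G z1 z1 + Qf G z1 z2 + Qf G z2 z1 + Qf G z2 z2 := by
    rw [hz12, Qf_add_left, Qf_add_right, Qf_add_right]
    ring
  have hsym21 : Qf G z2 z1 = Qf G z1 z2 := Qf_symm G z2 z1
  have htri : |Qf G z z| ≤ |Qf G z1 z2| + |Qf G z1 z2| +
      (|Qf G w w| + |c * Qf G w one| + |c * Qf G w one| + |c * (c * Qf G one one)|) := by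
    rw [hsplit4, hB1, hsym21, hQz2, hQ1w]
    calc |0 + Qf G z1 z2 + Qf G z1 z2 +
        (Qf G w w + c * Qf G w one + c * Qf G w one + c * (c * Qf G one one))|
        ≤ |Qf G z1 z2| + |Qf G z1 z2| + |Qf G w w + c * Qf G w one + c * Qf G w one +
          c * (c * Qf G one one)| := by
          rw [zero_add]
          refine (abs_add_le _ _).trans ?_
          gcongr
          exact abs_add_le _ _
    _ ≤ |Qf G z1 z2| + |Qf G z1 z2| + (|Qf G w w| + |c * Qf G w one| + |c * Qf G w one| +
          |c * (c * Qf G one one)|) := by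
          gcongr
          refine (abs_add_le _ _).trans ?_
          gcongr
          refine (abs_add_le _ _).trans ?_
          gcongr
          exact abs_add_le _ _
  have hfinal_eq : (2 * Real.sqrt M + C₂ * M + 2 * C₂ * C₃ * Real.sqrt M + C₁ * C₃ ^ 2) / Real.sqrt d
      = Real.sqrt M / Real.sqrt d + Real.sqrt M / Real.sqrt d +
        (C₂ * M / Real.sqrt d + C₂ * C₃ * Real.sqrt M / Real.sqrt d +
          C₂ * C₃ * Real.sqrt M / Real.sqrt d + C₁ * C₃ ^ 2 / Real.sqrt d) := by
    field_simp
    ring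
  rw [hfinal_eq]
  linarith [hcross, hQww, hterm2, hterm3, htri]

/-- the key spectral reduction -/
lemma key_bound (G : SimpleGraph (Fin n)) (ε : ℝ)
    (hquad : ∀ x : Fin n → ℝ, (∑ v, x v ^ 2) = 1 → (∀ v, G.degree v = 0 → x v = 0) →
      (∑ v, x v * Real.sqrt (G.degree v)) = 0 →
      |1 - ∑ u, ∑ v, x u * (normLap G u v * x v)| ≤ ε) :
    ∀ j : Fin (Nat.card (Fin n)), {v : Fin n | G.degree v = 0}.ncard < (j : ℕ) →
      |1 - sortedLapEigs G j| ≤ ε := by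
  intro j hj
  letI F : Fintype (Fin n) := Fintype.ofFinite (Fin n)
  letI D : DecidableEq (Fin n) := Classical.decEq (Fin n)
  rw [Subsingleton.elim (Fin.fintype n) F] at hquad hj
  set L : Matrix (Fin n) (Fin n) ℝ := normLap G with hLdef
  let hH := @normLap_isHermitian (Fin n) F G
  let eig : Fin n → ℝ := hH.eigenvalues
  let u : Fin n → (Fin n → ℝ) := fun v => ⇑(hH.eigenvectorBasis v)
  let f : Fin (Nat.card (Fin n)) → ℝ := fun i =>
    (@Matrix.IsHermitian.eigenvalues ℝ _ (Fin n) F (@normLap (Fin n) F G) D hH)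
      ((@Fintype.equivFin (Fin n) F).symm (finCongr (@Nat.card_eq_fintype_card (Fin n) F) i))
  have hs : sortedLapEigs G j = (f ∘ Tuple.sort f) j := rfl
  have heig : ∀ v : Fin n, L *ᵥ u v = eig v • u v := fun v => hH.mulVec_eigenvectorBasis v
  have horth : ∀ v w : Fin n, (∑ i, u v i * u w i) = if v = w then (1:ℝ) else 0 := by
    intro v w
    have h := (orthonormal_iff_ite (𝕜 := ℝ) (v := hH.eigenvectorBasis)).mp
      hH.eigenvectorBasis.orthonormal v w
    rw [PiLp.inner_apply] at h
    simp only [RCLike.inner_apply, conj_trivial] at h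
    rw [← h]
    exact Finset.sum_congr rfl fun i _ => mul_comm _ _
  -- decomposition apparatus
  let Iso : Finset (Fin n) := Finset.univ.filter (fun v => G.degree v = 0)
  let g0 : Fin n → ℝ := fun v => Real.sqrt (G.degree v)
  let KS : Finset (Fin n → ℝ) :=
    insert g0 (Iso.image (fun v => (Pi.single v 1 : Fin n → ℝ)))
  let K : Submodule ℝ (Fin n → ℝ) := Submodule.span ℝ (KS : Set _)
  have hfinrank : Module.finrank ℝ K ≤ Iso.card + 1 := by
    refine (finrank_span_finset_le_card (R := ℝ) KS).trans ?_
    refine (Finset.card_insert_le _ _).trans ?_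
    simpa using Finset.card_image_le
  have hdegpos : ∀ v : Fin n, G.Adj v v = False → True := fun _ _ => trivial
  have hLg0 : L *ᵥ g0 = 0 := by
    funext w
    have hexp : (L *ᵥ g0) w = ∑ v, ((if w = v ∧ 0 < G.degree w then (1:ℝ) else 0) -
        (if G.Adj w v then 1 / (Real.sqrt (G.degree w) * Real.sqrt (G.degree v)) else 0)) * g0 v := by
      simp only [Matrix.mulVec, dotProduct, hLdef, normLap]
    rw [hexp]
    simp only [sub_mul, Finset.sum_sub_distrib]
    have h1 : ∑ v, (if w = v ∧ 0 < G.degree w then (1:ℝ) else 0) * g0 v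
        = (if 0 < G.degree w then (1:ℝ) else 0) * g0 w := by
      rw [Finset.sum_eq_single w]
      · by_cases h : 0 < G.degree w <;> simp [h]
      · intro v _ hv
        rw [if_neg (fun hc => hv hc.1.symm), zero_mul]
      · intro h; exact absurd (Finset.mem_univ w) h
    have h2 : ∑ v, (if G.Adj w v then 1 / (Real.sqrt (G.degree w) * Real.sqrt (G.degree v)) else 0) * g0 v
        = (G.degree w : ℝ) * (1 / Real.sqrt (G.degree w)) := by
      have hpt : ∀ v, (if G.Adj w v then 1 / (Real.sqrt (G.degree w) * Real.sqrt (G.degree v)) else 0) * g0 v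
          = if G.Adj w v then 1 / Real.sqrt (G.degree w) else 0 := by
        intro v
        by_cases hadj : G.Adj w v
        · rw [if_pos hadj, if_pos hadj]
          have hdv : 0 < G.degree v := G.degree_pos_iff_exists_adj v |>.mpr ⟨w, hadj.symm⟩
          have hdv' : (0:ℝ) < Real.sqrt (G.degree v) := Real.sqrt_pos.mpr (by exact_mod_cast hdv)
          show 1 / (Real.sqrt (G.degree w) * Real.sqrt (G.degree v)) * Real.sqrt (G.degree v) = _
          field_simp
        · rw [if_neg hadj, if_neg hadj, zero_mul]
      rw [Finset.sum_congr rfl (fun v _ => hpt v)]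
      rw [Finset.sum_ite, Finset.sum_const, Finset.sum_const_zero, add_zero]
      have hfil : (Finset.univ.filter (fun v => G.Adj w v)) = G.neighborFinset w := by
        ext v; simp [SimpleGraph.mem_neighborFinset]
      rw [hfil, SimpleGraph.card_neighborFinset_eq_degree]
      simp [nsmul_eq_mul]
    rw [h1, h2]
    by_cases hdw : 0 < G.degree w
    · have hdw' : (0:ℝ) < Real.sqrt (G.degree w) := Real.sqrt_pos.mpr (by exact_mod_cast hdw)
      rw [if_pos hdw]
      show 1 * g0 w - _ = (0 : Fin n → ℝ) w
      simp only [one_mul, Pi.zero_apply]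
      show Real.sqrt (G.degree w) - (G.degree w : ℝ) * (1 / Real.sqrt (G.degree w)) = 0
      rw [mul_one_div, sub_eq_zero]
      rw [eq_div_iff (ne_of_gt hdw')]
      rw [Real.mul_self_sqrt (by positivity)]
    · have hdw0 : G.degree w = 0 := Nat.eq_zero_of_not_pos hdw
      rw [if_neg hdw]
      show 0 * g0 w - _ = (0 : Fin n → ℝ) w
      simp [hdw0]
  have hLsingle : ∀ v, G.degree v = 0 → L *ᵥ (Pi.single v 1 : Fin n → ℝ) = 0 := by
    intro v hv
    funext w
    have hexp : (L *ᵥ (Pi.single v 1 : Fin n → ℝ)) w = ∑ k, L w k * (Pi.single v 1 : Fin n → ℝ) k := by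
      simp only [Matrix.mulVec, dotProduct]
    rw [hexp, Finset.sum_eq_single v]
    · have hsv : (Pi.single v 1 : Fin n → ℝ) v = 1 := Pi.single_eq_same v 1
      rw [hsv, mul_one]
      show ((if w = v ∧ 0 < G.degree w then (1:ℝ) else 0) -
        (if G.Adj w v then 1 / (Real.sqrt (G.degree w) * Real.sqrt (G.degree v)) else 0)) = (0 : Fin n → ℝ) w
      have c1 : ¬(w = v ∧ 0 < G.degree w) := by
        rintro ⟨rfl, hp⟩; omega
      have c2 : ¬ G.Adj w v := by
        intro hadj
        have : 0 < G.degree v := G.degree_pos_iff_exists_adj v |>.mpr ⟨w, hadj.symm⟩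
        omega
      rw [if_neg c1, if_neg c2]
      simp
    · intro k _ hk
      rw [Pi.single_eq_of_ne (Ne.symm (Ne.symm hk)) 1, mul_zero]
    · intro h; exact absurd (Finset.mem_univ v) h
  have hLK : ∀ x : Fin n → ℝ, x ∈ K → L *ᵥ x = 0 := by
    intro x hx
    induction hx using Submodule.span_induction with
    | mem x hx =>
        simp only [KS, Finset.coe_insert, Set.mem_insert_iff, Finset.coe_image,
          Set.mem_image, Finset.mem_coe, Finset.mem_filter, Iso] at hx
        rcases hx with rfl | ⟨v, ⟨-, hv⟩, rfl⟩
        · exact hLg0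
        · exact hLsingle v hv
    | zero => simp [Matrix.mulVec_zero]
    | add x y hx hy ihx ihy => rw [Matrix.mulVec_add, ihx, ihy]; simp
    | smul a x hx ih => rw [Matrix.mulVec_smul, ih]; simp
  have hdec : ∀ x : Fin n → ℝ, ∃ a b : Fin n → ℝ, x = a + b ∧
      a ∈ K ∧
      (a ⬝ᵥ b) = 0 ∧ (∀ v, G.degree v = 0 → b v = 0) ∧ (b ⬝ᵥ g0) = 0 := by
    intro x
    set s0 : ℝ := g0 ⬝ᵥ g0 with hs0def
    set c : ℝ := if s0 = 0 then 0 else (x ⬝ᵥ g0) / s0 with hcdef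
    set a : Fin n → ℝ := (fun v => if G.degree v = 0 then x v else 0) + c • g0 with hadef
    set b : Fin n → ℝ := x - a with hbdef
    have hg0iso : ∀ v, G.degree v = 0 → g0 v = 0 := by
      intro v hv; show Real.sqrt (G.degree v) = 0; rw [hv]; simp
    have hbiso : ∀ v, G.degree v = 0 → b v = 0 := by
      intro v hv
      show x v - ((if G.degree v = 0 then x v else 0) + c * g0 v) = 0
      rw [if_pos hv, hg0iso v hv, mul_zero, add_zero, sub_self]
    have hg0case : s0 = 0 → ∀ v, g0 v = 0 := by
      intro hs0 v
      have h1 : ∀ i ∈ Finset.univ, (0:ℝ) ≤ g0 i * g0 i := fun i _ => mul_self_nonneg _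
      have := (Finset.sum_eq_zero_iff_of_nonneg h1).mp hs0 v (Finset.mem_univ v)
      nlinarith [this]
    have hag0 : a ⬝ᵥ g0 = x ⬝ᵥ g0 := by
      show ∑ v, ((if G.degree v = 0 then x v else 0) + c * g0 v) * g0 v = x ⬝ᵥ g0
      have hpt : ∀ v, ((if G.degree v = 0 then x v else 0) + c * g0 v) * g0 v
          = c * (g0 v * g0 v) := by
        intro v
        by_cases hv : G.degree v = 0
        · rw [if_pos hv, hg0iso v hv]; ring
        · rw [if_neg hv]; ring
      rw [Finset.sum_congr rfl (fun v _ => hpt v), ← Finset.mul_sum]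
      by_cases hs0 : s0 = 0
      · have : x ⬝ᵥ g0 = 0 := by
          show ∑ v, x v * g0 v = 0
          exact Finset.sum_eq_zero fun v _ => by rw [hg0case hs0 v, mul_zero]
        rw [this]
        rw [show (∑ v, g0 v * g0 v) = s0 from rfl, hs0, mul_zero]
      · rw [show (∑ v, g0 v * g0 v) = s0 from rfl]
        rw [hcdef, if_neg hs0, div_mul_cancel₀ _ hs0]
    have hbg0 : b ⬝ᵥ g0 = 0 := by
      show (x - a) ⬝ᵥ g0 = 0
      rw [sub_dotProduct, hag0, sub_self]
    refine ⟨a, b, by rw [hbdef]; ring, ?_, ?_, hbiso, hbg0⟩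
    · -- a ∈ K
      have hisopart : (fun v => if G.degree v = 0 then x v else 0)
          = ∑ v ∈ Iso, x v • (Pi.single v 1 : Fin n → ℝ) := by
        funext w
        show (if G.degree w = 0 then x w else 0) = (∑ v ∈ Iso, x v • (Pi.single v 1 : Fin n → ℝ)) w
        rw [Finset.sum_apply]
        have hpt : ∀ v ∈ Iso, (x v • (Pi.single v 1 : Fin n → ℝ)) w = if v = w then x v else 0 := by
          intro v _
          by_cases hvw : v = w
          · subst hvw; simp
          · simp [Pi.single_eq_of_ne (Ne.symm hvw), hvw]
        rw [Finset.sum_congr rfl hpt, Finset.sum_ite_eq' Iso w (fun v => x v)]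
        have hmemIso : w ∈ Iso ↔ G.degree w = 0 := by
          simp [Iso]
        by_cases hw : G.degree w = 0
        · rw [if_pos hw, if_pos (hmemIso.mpr hw)]
        · rw [if_neg hw, if_neg (fun hc => hw (hmemIso.mp hc))]
      have hmem1 : (fun v => if G.degree v = 0 then x v else 0) ∈ K := by
        rw [hisopart]
        refine Submodule.sum_mem K ?_
        intro v hv
        refine Submodule.smul_mem K _ (Submodule.subset_span ?_)
        simp only [KS, Finset.coe_insert, Set.mem_insert_iff, Finset.coe_image, Set.mem_image]
        right
        exact ⟨v, hv, rfl⟩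
      have hmem2 : (c • g0) ∈ K :=
        Submodule.smul_mem K c (Submodule.subset_span (by
          simp only [KS, Finset.coe_insert, Set.mem_insert_iff]; tauto))
      exact Submodule.add_mem K hmem1 hmem2
    · -- a ⬝ᵥ b = 0
      show ∑ v, ((if G.degree v = 0 then x v else 0) + c * g0 v) * b v = 0
      have hpt : ∀ v, ((if G.degree v = 0 then x v else 0) + c * g0 v) * b v
          = c * (g0 v * b v) := by
        intro v
        by_cases hv : G.degree v = 0
        · rw [if_pos hv, hbiso v hv]; ring
        · rw [if_neg hv]; ring
      rw [Finset.sum_congr rfl (fun v _ => hpt v), ← Finset.mul_sum]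
      have : ∑ v, g0 v * b v = b ⬝ᵥ g0 := by
        show _ = ∑ v, b v * g0 v
        exact Finset.sum_congr rfl fun v _ => mul_comm _ _
      rw [this, hbg0, mul_zero]
  have hsymm_ent : ∀ i k : Fin n, L i k = L k i := by
    intro i k
    have h1 : Lᴴ i k = L i k := congrFun (congrFun hH i) k
    rw [Matrix.conjTranspose_apply, star_trivial] at h1
    exact h1.symm
  have hsym : ∀ a b : Fin n → ℝ, a ⬝ᵥ (L *ᵥ b) = (L *ᵥ a) ⬝ᵥ b := by
    intro a b
    simp only [dotProduct, Matrix.mulVec, Finset.mul_sum, Finset.sum_mul]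
    rw [Finset.sum_comm]
    refine Finset.sum_congr rfl fun k _ => Finset.sum_congr rfl fun i _ => ?_
    rw [hsymm_ent i k]; ring
  have hquad' : ∀ x : Fin n → ℝ, (∑ v, x v ^ 2) = 1 → (∀ v, G.degree v = 0 → x v = 0) →
      (x ⬝ᵥ g0) = 0 → |1 - x ⬝ᵥ (L *ᵥ x)| ≤ ε := by
    intro x h1 h2 h3
    have h4 := hquad x h1 h2 h3
    have h5 : x ⬝ᵥ (L *ᵥ x) = ∑ u, ∑ v, x u * (L u v * x v) := by
      simp only [dotProduct, Matrix.mulVec, Finset.mul_sum]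
    rwa [h5]
  -- the eigen-pair dichotomy
  have hpair : ∀ (lam : ℝ) (y : Fin n → ℝ), L *ᵥ y = lam • y → (y ⬝ᵥ y) = 1 →
      |1 - lam| ≤ ε ∨ (lam = 0 ∧ (ε < 1 → y ∈ K)) := by
    intro lam y hy hyunit
    obtain ⟨a, b, hxab, haK, hab, hbiso, hbg0⟩ := hdec y
    have hLa : L *ᵥ a = 0 := hLK a haK
    have hLb : L *ᵥ b = lam • a + lam • b := by
      have h1 : L *ᵥ b = L *ᵥ y := by rw [hxab, Matrix.mulVec_add, hLa, zero_add]
      rw [h1, hy, hxab, smul_add]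
    have haa : lam * (a ⬝ᵥ a) = 0 := by
      have h1 : a ⬝ᵥ (L *ᵥ b) = 0 := by rw [hsym, hLa, zero_dotProduct]
      rw [hLb, dotProduct_add, dotProduct_smul, dotProduct_smul,
        smul_eq_mul, smul_eq_mul, hab, mul_zero, add_zero] at h1
      exact h1
    by_cases hlam : lam = 0
    · right
      refine ⟨hlam, fun hε1 => ?_⟩
      subst hlam
      have hLb0 : L *ᵥ b = 0 := by rw [hLb]; simp
      by_cases hbb : b ⬝ᵥ b = 0
      · have hb0 : b = 0 := dotProduct_self_eq_zero.mp hbb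
        have hya : y = a := by rw [hxab, hb0, add_zero]
        rw [hya]; exact haK
      · exfalso
        have hsnn : 0 ≤ b ⬝ᵥ b := by
          show 0 ≤ ∑ v, b v * b v
          exact Finset.sum_nonneg fun v _ => mul_self_nonneg _
        have hspos : 0 < b ⬝ᵥ b := lt_of_le_of_ne hsnn (Ne.symm hbb)
        set y' : Fin n → ℝ := (Real.sqrt (b ⬝ᵥ b))⁻¹ • b with hy'def
        have hsq : Real.sqrt (b ⬝ᵥ b) * Real.sqrt (b ⬝ᵥ b) = b ⬝ᵥ b :=
          Real.mul_self_sqrt hsnn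
        have hsqpos : 0 < Real.sqrt (b ⬝ᵥ b) := Real.sqrt_pos.mpr hspos
        have h1 : ∑ v, y' v ^ 2 = 1 := by
          have : ∀ v, y' v ^ 2 = ((Real.sqrt (b ⬝ᵥ b))⁻¹ * (Real.sqrt (b ⬝ᵥ b))⁻¹) * (b v * b v) := by
            intro v; show ((Real.sqrt (b ⬝ᵥ b))⁻¹ * b v) ^ 2 = _; ring
          rw [Finset.sum_congr rfl (fun v _ => this v), ← Finset.mul_sum]
          rw [show (∑ v, b v * b v) = b ⬝ᵥ b from rfl, ← hsq]
          field_simp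
          rw [Real.sqrt_sq hsqpos.le]
        have h2 : ∀ v, G.degree v = 0 → y' v = 0 := by
          intro v hv; show (Real.sqrt (b ⬝ᵥ b))⁻¹ * b v = 0; rw [hbiso v hv, mul_zero]
        have h3 : y' ⬝ᵥ g0 = 0 := by
          rw [hy'def, smul_dotProduct, hbg0, smul_zero]
        have h4 := hquad' y' h1 h2 h3
        have h5 : y' ⬝ᵥ (L *ᵥ y') = 0 := by
          rw [hy'def, Matrix.mulVec_smul, hLb0, smul_zero, dotProduct_zero]
        rw [h5, sub_zero, abs_one] at h4
        linarith
    · left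
      have ha0 : a = 0 := by
        have h1 : a ⬝ᵥ a = 0 := by
          rcases mul_eq_zero.mp haa with h | h
          · exact absurd h hlam
          · exact h
        exact dotProduct_self_eq_zero.mp h1
      have hyb : y = b := by rw [hxab, ha0, zero_add]
      have h1 : ∑ v, y v ^ 2 = 1 := by
        have : ∑ v, y v ^ 2 = y ⬝ᵥ y := by
          exact Finset.sum_congr rfl fun v _ => sq (y v)
        rw [this, hyunit]
      have h2 : ∀ v, G.degree v = 0 → y v = 0 := by
        intro v hv; rw [hyb]; exact hbiso v hv
      have h3 : y ⬝ᵥ g0 = 0 := by rw [hyb]; exact hbg0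
      have h4 := hquad' y h1 h2 h3
      have h5 : y ⬝ᵥ (L *ᵥ y) = lam := by
        rw [hy, dotProduct_smul, smul_eq_mul, hyunit, mul_one]
      rwa [h5] at h4
  -- sorting setup
  let σ := Tuple.sort f
  let e : Fin (Nat.card (Fin n)) ≃ Fin n :=
    (finCongr (@Nat.card_eq_fintype_card (Fin n) F)).trans (@Fintype.equivFin (Fin n) F).symm
  have hfe : ∀ i, f i = eig (e i) := fun i => rfl
  have hmono : Monotone (f ∘ σ) := Tuple.monotone_sort f
  have hIso : {v : Fin n | G.degree v = 0}.ncard = Iso.card := by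
    rw [← Set.ncard_coe_finset]
    congr 1
    ext v
    simp [Iso]
  rw [hIso] at hj
  have hunit : ∀ v, (u v ⬝ᵥ u v) = 1 := by
    intro v; have := horth v v; simpa [dotProduct] using this
  have hdich : ∀ v : Fin n, |1 - eig v| ≤ ε ∨
      (eig v = 0 ∧ (ε < 1 → u v ∈ K)) :=
    fun v => hpair (eig v) (u v) (heig v) (hunit v)
  rw [hs]
  by_cases hε1 : ε < 1
  · have hlow : 1 - ε ≤ (f ∘ σ) j := by
      by_contra hcon
      push_neg at hcon
      have hsmall : ∀ i : Fin (Nat.card (Fin n)), i ≤ j → eig (e (σ i)) < 1 - ε := by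
        intro i hi
        calc eig (e (σ i)) = (f ∘ σ) i := rfl
        _ ≤ (f ∘ σ) j := hmono hi
        _ < 1 - ε := hcon
      have hmem : ∀ i : Fin (Nat.card (Fin n)), i ≤ j →
          u (e (σ i)) ∈ K := by
        intro i hi
        rcases hdich (e (σ i)) with h | h
        · exfalso
          have h1 := (abs_le.mp h).2
          have h2 := hsmall i hi
          have : (f ∘ σ) i = eig (e (σ i)) := rfl
          linarith
        · exact h.2 hε1
      have hinj : Function.Injective (fun i : ↥(Finset.Iic j) => e (σ i.1)) := by
        intro a b hab
        have := σ.injective (e.injective hab)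
        exact Subtype.ext this
      have hON : Orthonormal ℝ (fun i : ↥(Finset.Iic j) =>
          WithLp.toLp 2 (u (e (σ i.1)))) := by
        rw [orthonormal_iff_ite]
        intro a b
        rw [PiLp.inner_apply]
        simp only [RCLike.inner_apply, conj_trivial]
        rw [Finset.sum_congr rfl fun i _ => mul_comm (u (e (σ b.1)) i) (u (e (σ a.1)) i)]
        rw [horth (e (σ a.1)) (e (σ b.1))]
        by_cases hab : a = b
        · simp [hab]
        · rw [if_neg (fun hc => hab (hinj (by simpa using hc))), if_neg hab]
      have hLI : LinearIndependent ℝ (fun i : ↥(Finset.Iic j) =>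
          (⟨u (e (σ i.1)), hmem i.1 (Finset.mem_Iic.mp i.2)⟩ : K)) := by
        apply LinearIndependent.of_comp K.subtype
        exact LinearIndependent.of_comp (WithLp.linearEquiv 2 ℝ (Fin n → ℝ)).symm.toLinearMap
          hON.linearIndependent
      have hc1 : Fintype.card ↥(Finset.Iic j) ≤ Module.finrank ℝ K :=
        hLI.fintype_card_le_finrank
      rw [Fintype.card_coe, Fin.card_Iic] at hc1
      omega
    rcases hdich (e (σ j)) with h | h
    · exact h
    · exfalso
      have h0 : (f ∘ σ) j = 0 := h.1
      rw [h0] at hlow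
      linarith
  · push_neg at hε1
    rcases hdich (e (σ j)) with h | h
    · exact h
    · have h0 : (f ∘ σ) j = 0 := h.1
      rw [h0]
      simpa using hε1

end Stmt4Aux


/-- The deterministic spectral-gap lemma: for a graph `G` on `n`
vertices satisfying the bounded-degree, adjacency-matrix, fuzz and parallel-eigenspace
conditions with constants `C₁, C₂, C₃, M`, there is `C = C(C₁,C₂,C₃,M)` with
`max_{i > I+1} |1 − λ_i| < C/√d`, where `I` is the number of isolated vertices. -/
theorem stmt_4 (C₁ C₂ C₃ M : ℝ) (hC₁ : 0 < C₁) (hC₂ : 0 < C₂) (hC₃ : 0 < C₃)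
    (hM : 0 < M) :
    ∃ C : ℝ, 0 < C ∧ ∀ (n : ℕ) (d : ℝ), 1 ≤ d → ∀ G : SimpleGraph (Fin n),
    -- (1) bounded degree condition
    (∀ v, (G.degree v : ℝ) ≤ C₁ * d) →
    -- (2) adjacency matrix condition
    (∀ x y : Fin n → ℝ, (∑ i, x i) = 0 → (∑ i, x i ^ 2) = 1 → (∑ i, y i ^ 2) = 1 →
      |∑ u, ∑ v, x u * ((if G.Adj u v then (1 : ℝ) else 0) * y v)| ≤ C₂ * Real.sqrt d) →
    -- (3) fuzz condition: ℵ_M = {v | deg v ≤ d/M} is independent, small, and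
    -- vertices outside it have at most one neighbour inside it
    (∀ u v : Fin n, (G.degree u : ℝ) ≤ d / M → (G.degree v : ℝ) ≤ d / M → ¬ G.Adj u v) →
    (({v : Fin n | (G.degree v : ℝ) ≤ d / M}.ncard : ℝ) ≤ n / 2) →
    (∀ u : Fin n, ¬ ((G.degree u : ℝ) ≤ d / M) →
      {v : Fin n | (G.degree v : ℝ) ≤ d / M ∧ G.Adj u v}.ncard ≤ 1) →
    -- (4) parallel eigenspaces condition
    (∀ x : Fin n → ℝ, (∑ i, x i ^ 2) = 1 →
      (∑ v, x v * Real.sqrt (G.degree v) * (if 0 < G.degree v then (1 : ℝ) else 0)) = 0 →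
      |∑ v, x v * (if 0 < G.degree v then 1 / Real.sqrt (G.degree v) else 0) *
          (if (G.degree v : ℝ) ≤ d / M then 0 else 1)| ≤ C₃ * Real.sqrt n / d) →
    -- conclusion
    ∀ j : Fin (Nat.card (Fin n)), {v : Fin n | G.degree v = 0}.ncard < (j : ℕ) →
      |1 - sortedLapEigs G j| < C / Real.sqrt d := by
  refine ⟨2 * Real.sqrt M + C₂ * M + 2 * C₂ * C₃ * Real.sqrt M + C₁ * C₃ ^ 2 + 1, ?_, ?_⟩
  · have hsM : 0 ≤ Real.sqrt M := Real.sqrt_nonneg M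
    nlinarith [mul_pos hC₂ hM, mul_pos hC₁ (pow_pos hC₃ 2),
      mul_nonneg (mul_nonneg (mul_pos hC₂ hC₃).le (by norm_num : (0:ℝ) ≤ 2)) hsM]
  intro n d hd G h1 h2 h3a h3b h3c h4 j hj
  have hε := Stmt4Aux.quad_est G d C₁ C₂ C₃ M hC₁ hC₂ hC₃ hM hd h1 h2 h3a h3c h4
  have hkey := Stmt4Aux.key_bound G
    ((2 * Real.sqrt M + C₂ * M + 2 * C₂ * C₃ * Real.sqrt M + C₁ * C₃ ^ 2) / Real.sqrt d)
    hε j hj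
  refine lt_of_le_of_lt hkey ?_
  have hd0 : (0:ℝ) < d := lt_of_lt_of_le one_pos hd
  have hsd0 : 0 < Real.sqrt d := Real.sqrt_pos.mpr hd0
  rw [div_lt_div_iff₀ hsd0 hsd0]
  have hnum : 2 * Real.sqrt M + C₂ * M + 2 * C₂ * C₃ * Real.sqrt M + C₁ * C₃ ^ 2
      < 2 * Real.sqrt M + C₂ * M + 2 * C₂ * C₃ * Real.sqrt M + C₁ * C₃ ^ 2 + 1 := by linarith
  exact mul_lt_mul_of_pos_right hnum hsd0 |>.trans_le (le_of_eq rfl)
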